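/- For density matrices ρ and σ on a finite-dimensional Hilbert space, and an arbitrary operator W, the fidelity satisfies F(ρ, W σ W†) ≥ F(W† ρ W, σ), where F(ρ,σ) = Tr√(√ρ σ √ρ). -/

import Mathlib

open Matrix ComplexOrder
open scoped ComplexOrder

noncomputable section
open Classical in

/-- Square root of a matrix: the positive semidefinite square root if the matrix is
positive semidefinite, and `0` otherwise. -/
def msqrt {n : Type*} [Fintype n] [DecidableEq n] (A : Matrix n n ℂ) : Matrix n n ℂ :=
  if h : A.PosSemidef then
    h.1.eigenvectorUnitary.1 * diagonal ((↑) ∘ Real.sqrt ∘ h.1.eigenvalues) *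
      (star h.1.eigenvectorUnitary : Matrix n n ℂ) else 0

/-- Fidelity of two positive semidefinite operators: `F(ρ,σ) = Tr √(√ρ σ √ρ)`
(real part of the trace). -/
def fidelity {n : Type*} [Fintype n] [DecidableEq n] (ρ σ : Matrix n n ℂ) : ℝ :=
  ((msqrt (msqrt ρ * σ * msqrt ρ)).trace).re

/-- The positive semidefinite square root of a positive semidefinite matrix. -/
def Matrix.PosSemidef.sqrt {n : Type*} [Fintype n] [DecidableEq n] {A : Matrix n n ℂ}
    (h : A.PosSemidef) : Matrix n n ℂ :=
  h.1.eigenvectorUnitary.1 * diagonal ((↑) ∘ Real.sqrt ∘ h.1.eigenvalues) *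
    (star h.1.eigenvectorUnitary : Matrix n n ℂ)

lemma Matrix.PosSemidef.posSemidef_sqrt {n : Type*} [Fintype n] [DecidableEq n]
    {A : Matrix n n ℂ} (h : A.PosSemidef) : h.sqrt.PosSemidef := by
  unfold Matrix.PosSemidef.sqrt
  have hd : (diagonal ((↑) ∘ Real.sqrt ∘ h.1.eigenvalues : n → ℂ)).PosSemidef := by
    rw [posSemidef_diagonal_iff]
    intro i
    simp [Real.sqrt_nonneg]
  simpa [Matrix.star_eq_conjTranspose] using hd.mul_mul_conjTranspose_same
    (h.1.eigenvectorUnitary.1)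

lemma Matrix.PosSemidef.sqrt_mul_self {n : Type*} [Fintype n] [DecidableEq n]
    {A : Matrix n n ℂ} (h : A.PosSemidef) : h.sqrt * h.sqrt = A := by
  unfold Matrix.PosSemidef.sqrt
  have hU := Matrix.mem_unitaryGroup_iff'.mp h.1.eigenvectorUnitary.2
  conv_rhs => rw [h.1.spectral_theorem]
  rw [Unitary.conjStarAlgAut_apply]
  calc _ = h.1.eigenvectorUnitary.1 * diagonal ((↑) ∘ Real.sqrt ∘ h.1.eigenvalues) *
        (star h.1.eigenvectorUnitary.1 * h.1.eigenvectorUnitary.1) *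
        diagonal ((↑) ∘ Real.sqrt ∘ h.1.eigenvalues) *
        (star h.1.eigenvectorUnitary : Matrix n n ℂ) := by simp only [mul_assoc]
    _ = _ := by
      rw [hU, mul_one, mul_assoc _ (diagonal _) (diagonal _), diagonal_mul_diagonal]
      congr 2
      congr 1
      funext i
      simp only [Function.comp_apply]
      rw [← Complex.ofReal_mul, Real.mul_self_sqrt (h.eigenvalues_nonneg i)]
      rfl

namespace FidelityAux

open Polynomial

variable {n : Type*} [Fintype n] [DecidableEq n]

lemma msqrt_eq {A : Matrix n n ℂ} (hA : A.PosSemidef) : msqrt A = hA.sqrt := dif_pos hA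

lemma aeval_diagonal' (d : n → ℂ) (p : Polynomial ℂ) :
    aeval (Matrix.diagonal d) p = Matrix.diagonal fun i => p.eval (d i) := by
  have h1 : aeval (Matrix.diagonalAlgHom ℂ d) p = Matrix.diagonalAlgHom ℂ (aeval d p) :=
    aeval_algHom_apply (Matrix.diagonalAlgHom ℂ) d p
  simp only [Matrix.diagonalAlgHom_apply] at h1
  rw [h1]
  have h3 : (aeval d p : n → ℂ) = fun i => p.eval (d i) := by
    funext i
    have h2 := aeval_algHom_apply (Pi.evalAlgHom ℂ (fun _ : n => ℂ) i) d p
    simp only [Pi.evalAlgHom_apply] at h2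
    rw [← h2, Polynomial.coe_aeval_eq_eval]
  rw [h3]

lemma pow_unitary_conj (U D : Matrix n n ℂ) (hU : U ∈ Matrix.unitaryGroup n ℂ) (k : ℕ) :
    (U * D * star U) ^ k = U * D ^ k * star U := by
  induction k with
  | zero => simp [Matrix.mem_unitaryGroup_iff.mp hU]
  | succ k ih =>
    rw [pow_succ, ih, pow_succ]
    have h1 : star U * U = 1 := Matrix.mem_unitaryGroup_iff'.mp hU
    calc U * D ^ k * star U * (U * D * star U)
        = U * D ^ k * (star U * U) * D * star U := by simp only [mul_assoc]
      _ = U * (D ^ k * D) * star U := by rw [h1]; simp only [mul_assoc, one_mul, mul_one]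

lemma aeval_unitary_conj (U D : Matrix n n ℂ) (hU : U ∈ Matrix.unitaryGroup n ℂ)
    (p : Polynomial ℂ) :
    aeval (U * D * star U) p = U * aeval D p * star U := by
  induction p using Polynomial.induction_on' with
  | add p q hp hq => simp [hp, hq, mul_add, add_mul]
  | monomial k a =>
    rw [aeval_monomial, aeval_monomial, pow_unitary_conj U D hU k]
    simp only [← Algebra.smul_def, Matrix.mul_smul, Matrix.smul_mul]

lemma aeval_eq_sqrt {A : Matrix n n ℂ} (hA : A.PosSemidef) (p : Polynomial ℂ)
    (hp : ∀ i, p.eval ((hA.1.eigenvalues i : ℝ) : ℂ) = (Real.sqrt (hA.1.eigenvalues i) : ℂ)) :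
    aeval A p = hA.sqrt := by
  conv_lhs => rw [hA.1.spectral_theorem]
  simp only [Unitary.conjStarAlgAut_apply, Unitary.coe_star]
  rw [aeval_unitary_conj _ _ (hA.1.eigenvectorUnitary).2, aeval_diagonal']
  rw [Matrix.PosSemidef.sqrt]
  have hd : (fun i => p.eval ((RCLike.ofReal ∘ hA.1.eigenvalues) i))
      = ((↑) ∘ Real.sqrt ∘ hA.1.eigenvalues : n → ℂ) := by
    funext i
    simpa using hp i
  rw [hd]

lemma pow_shift (M : Matrix n n ℂ) (k : ℕ) :
    (Mᴴ * M) ^ k * Mᴴ = Mᴴ * (M * Mᴴ) ^ k := by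
  induction k with
  | zero => simp
  | succ k ih =>
    rw [pow_succ, pow_succ]
    calc (Mᴴ * M) ^ k * (Mᴴ * M) * Mᴴ
        = (Mᴴ * M) ^ k * Mᴴ * (M * Mᴴ) := by simp only [mul_assoc]
      _ = Mᴴ * (M * Mᴴ) ^ k * (M * Mᴴ) := by rw [ih]
      _ = Mᴴ * ((M * Mᴴ) ^ k * (M * Mᴴ)) := by rw [mul_assoc]

lemma trace_pow_comm (M : Matrix n n ℂ) (k : ℕ) :
    ((Mᴴ * M) ^ k).trace = ((M * Mᴴ) ^ k).trace := by
  cases k with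
  | zero => simp
  | succ k =>
    rw [pow_succ, ← mul_assoc, pow_shift, pow_succ']
    rw [Matrix.trace_mul_cycle]

lemma trace_msqrt_comm (M : Matrix n n ℂ) :
    (msqrt (Mᴴ * M)).trace = (msqrt (M * Mᴴ)).trace := by
  have hA := Matrix.posSemidef_conjTranspose_mul_self M
  have hB := Matrix.posSemidef_self_mul_conjTranspose M
  rw [msqrt_eq hA, msqrt_eq hB]
  set s : Finset ℂ := (Finset.univ.image fun i => ((hA.1.eigenvalues i : ℝ) : ℂ)) ∪
      (Finset.univ.image fun i => ((hB.1.eigenvalues i : ℝ) : ℂ)) with hs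
  set f : ℂ → ℂ := fun z => (Real.sqrt z.re : ℂ) with hf
  set p : Polynomial ℂ := Lagrange.interpolate s id f with hpdef
  have hinj : Set.InjOn (id : ℂ → ℂ) s := fun x _ y _ h => h
  have hnode : ∀ x ∈ s, p.eval x = f x := fun x hx => by
    simpa [hpdef] using Lagrange.eval_interpolate_at_node f hinj hx
  have hpA : ∀ i, p.eval ((hA.1.eigenvalues i : ℝ) : ℂ) = (Real.sqrt (hA.1.eigenvalues i) : ℂ) := by
    intro i
    rw [hnode _ (Finset.mem_union_left _ (Finset.mem_image_of_mem _ (Finset.mem_univ i)))]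
    simp [hf]
  have hpB : ∀ i, p.eval ((hB.1.eigenvalues i : ℝ) : ℂ) = (Real.sqrt (hB.1.eigenvalues i) : ℂ) := by
    intro i
    rw [hnode _ (Finset.mem_union_right _ (Finset.mem_image_of_mem _ (Finset.mem_univ i)))]
    simp [hf]
  rw [← aeval_eq_sqrt hA p hpA, ← aeval_eq_sqrt hB p hpB]
  rw [Polynomial.aeval_eq_sum_range, Polynomial.aeval_eq_sum_range]
  rw [Matrix.trace_sum, Matrix.trace_sum]
  refine Finset.sum_congr rfl fun k _ => ?_
  rw [Matrix.trace_smul, Matrix.trace_smul, trace_pow_comm]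

end FidelityAux

open FidelityAux in
/-- For positive semidefinite operators `ρ`, `σ` on a
finite-dimensional Hilbert space and an arbitrary operator `W`,
`F(ρ, W σ W†) ≥ F(W† ρ W, σ)`. -/
theorem fidelity_conj_ge {n : Type*} [Fintype n] [DecidableEq n]
    (ρ σ : Matrix n n ℂ) (hρ : ρ.PosSemidef) (hσ : σ.PosSemidef) (W : Matrix n n ℂ) :
    fidelity (Wᴴ * ρ * W) σ ≤ fidelity ρ (W * σ * Wᴴ) := by
  have hA : (Wᴴ * ρ * W).PosSemidef := hρ.conjTranspose_mul_mul_same W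
  have hB : (W * σ * Wᴴ).PosSemidef := hσ.mul_mul_conjTranspose_same W
  set sA := hA.sqrt with hsA
  set sρ := hρ.sqrt with hsρ
  set sσ := hσ.sqrt with hsσ
  have hAh : sAᴴ = sA := hA.posSemidef_sqrt.1
  have hρh : sρᴴ = sρ := hρ.posSemidef_sqrt.1
  have hσh : sσᴴ = sσ := hσ.posSemidef_sqrt.1
  have e1 : (sσ * sA)ᴴ * (sσ * sA) = sA * σ * sA := by
    rw [conjTranspose_mul, hAh, hσh, mul_assoc, ← mul_assoc sσ sσ sA, hσ.sqrt_mul_self,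
      ← mul_assoc]
  have e2 : (sσ * sA) * (sσ * sA)ᴴ = (sρ * W * sσ)ᴴ * (sρ * W * sσ) := by
    rw [conjTranspose_mul, hAh, hσh, conjTranspose_mul, conjTranspose_mul, hρh, hσh]
    have h1 : sA * sA = Wᴴ * ρ * W := hA.sqrt_mul_self
    have h2 : sρ * sρ = ρ := hρ.sqrt_mul_self
    calc sσ * sA * (sA * sσ) = sσ * (sA * sA) * sσ := by simp only [mul_assoc]
      _ = sσ * (Wᴴ * (sρ * sρ) * W) * sσ := by rw [h1, h2]
      _ = sσ * (Wᴴ * sρ) * (sρ * W * sσ) := by simp only [mul_assoc]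
  have e3 : (sρ * W * sσ) * (sρ * W * sσ)ᴴ = sρ * (W * σ * Wᴴ) * sρ := by
    rw [conjTranspose_mul, conjTranspose_mul, hρh, hσh]
    have h3 : sσ * sσ = σ := hσ.sqrt_mul_self
    calc sρ * W * sσ * (sσ * (Wᴴ * sρ)) = sρ * (W * (sσ * sσ) * Wᴴ) * sρ := by
          simp only [mul_assoc]
      _ = sρ * (W * σ * Wᴴ) * sρ := by rw [h3]
  have key : (msqrt (sA * σ * sA)).trace = (msqrt (sρ * (W * σ * Wᴴ) * sρ)).trace := by
    rw [← e1, trace_msqrt_comm, e2, trace_msqrt_comm, e3]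
  unfold fidelity
  rw [msqrt_eq hA, msqrt_eq hρ, ← hsA, ← hsρ, key]

end
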